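/- arXiv:2406.19514 — 6 statements merged into one kernel-verified Lean document; each statement's English description precedes it below -/
import Mathlib

section
/- If M ⊆ V × V is an arc-modification set such that (V, A Δ M) is transitive, then the set S of endpoints of arcs in M is a transitivity modulator for G = (V, A), i.e., G − S is transitive. Consequently, the minimum vertex-deletion distance to transitivity is at most twice the minimum arc-modification distance to transitivity: δ_vd ≤ 2·δ_am. -/
/-- The arc relation `A` is transitive when restricted to the vertex set `X`. -/
def TransOn {V : Type*} (A : V → V → Prop) (X : Set V) : Prop :=
  ∀ u ∈ X, ∀ v ∈ X, ∀ w ∈ X, A u v → A v w → A u w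

/-- The arc relation obtained from `A` by the symmetric difference with the
arc set `M`. -/
def XorRel {V : Type*} (A : V → V → Prop) (M : Set (V × V)) : V → V → Prop :=
  fun u v => Xor' (A u v) ((u, v) ∈ M)

lemma main_part {V : Type*} (A : V → V → Prop) (M : Set (V × V))
    (hM : Transitive (XorRel A M)) :
    TransOn A {x | ∃ p ∈ M, p.1 = x ∨ p.2 = x}ᶜ := by
  intro u hu v hv w hw hab hbc
  have h1 : (u, v) ∉ M := fun h => hu ⟨(u, v), h, Or.inl rfl⟩
  have h2 : (v, w) ∉ M := fun h => hv ⟨(v, w), h, Or.inl rfl⟩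
  have h3 : (u, w) ∉ M := fun h => hu ⟨(u, w), h, Or.inl rfl⟩
  have := hM (Or.inl ⟨hab, h1⟩) (Or.inl ⟨hbc, h2⟩)
  rcases this with ⟨h, _⟩ | ⟨h, _⟩
  · exact h
  · exact absurd h h3

/-- the endpoints of an arc-modification set towards transitivity
form a transitivity modulator; consequently δ_vd ≤ 2·δ_am. -/
theorem endpoints_modulator_and_dvd_le_two_dam {V : Type*} [Fintype V]
    (A : V → V → Prop) :
    (∀ M : Set (V × V), Transitive (XorRel A M) →
      TransOn A {x | ∃ p ∈ M, p.1 = x ∨ p.2 = x}ᶜ) ∧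
    sInf {n : ℕ | ∃ S : Set V, S.ncard = n ∧ TransOn A Sᶜ} ≤
      2 * sInf {n : ℕ | ∃ M : Set (V × V), M.ncard = n ∧
        Transitive (XorRel A M)} := by
  refine ⟨fun M hM => main_part A M hM, ?_⟩
  set T : Set ℕ := {n : ℕ | ∃ M : Set (V × V), M.ncard = n ∧
      Transitive (XorRel A M)} with hT
  have hTne : T.Nonempty := by
    refine ⟨({p | ¬ A p.1 p.2} : Set (V × V)).ncard, {p | ¬ A p.1 p.2}, rfl, ?_⟩
    intro a b c _ _
    by_cases h : A a c
    · exact Or.inl ⟨h, fun hc => hc h⟩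
    · exact Or.inr ⟨h, h⟩
  obtain ⟨M, hMcard, hMtrans⟩ := Nat.sInf_mem hTne
  set S : Set V := {x | ∃ p ∈ M, p.1 = x ∨ p.2 = x} with hS
  have hScard : S.ncard ≤ 2 * sInf T := by
    have hSeq : S = (Prod.fst '' M) ∪ (Prod.snd '' M) := by
      ext x
      constructor
      · rintro ⟨p, hp, rfl | rfl⟩
        · exact Or.inl ⟨p, hp, rfl⟩
        · exact Or.inr ⟨p, hp, rfl⟩
      · rintro (⟨p, hp, rfl⟩ | ⟨p, hp, rfl⟩)
        · exact ⟨p, hp, Or.inl rfl⟩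
        · exact ⟨p, hp, Or.inr rfl⟩
    rw [hSeq]
    calc (Prod.fst '' M ∪ Prod.snd '' M).ncard
        ≤ (Prod.fst '' M).ncard + (Prod.snd '' M).ncard := Set.ncard_union_le _ _
      _ ≤ M.ncard + M.ncard :=
          Nat.add_le_add (Set.ncard_image_le M.toFinite) (Set.ncard_image_le M.toFinite)
      _ = 2 * sInf T := by rw [hMcard]; ring
  refine le_trans (Nat.sInf_le ?_) hScard
  exact ⟨S, rfl, main_part A M hMtrans⟩
end

section
/- Let G = (V, A) be a directed graph and S ⊆ V a transitivity modulator. Then G has a bidirectional clique of size at least k if and only if there exists a subset S' ⊆ S that is a bidirectional clique such that, letting V' be the vertices of V \ S bidirectionally connected to all of S', some strongly connected component of G[V'] together with S' has size at least k. -/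
/-- `S` is a bidirectional clique in the digraph with arc relation `A`. -/
def BiClique {V : Type*} (A : V → V → Prop) (S : Set V) : Prop :=
  ∀ u ∈ S, ∀ v ∈ S, u ≠ v → A u v ∧ A v u

/-- Reachability by directed paths staying inside `X`. -/
def ReachIn {V : Type*} (A : V → V → Prop) (X : Set V) : V → V → Prop :=
  Relation.TransGen (fun a b => A a b ∧ a ∈ X ∧ b ∈ X)

/-- `C` is a strongly connected component of the subgraph induced on `X`. -/
def IsSCCIn {V : Type*} (A : V → V → Prop) (X : Set V) (C : Set V) : Prop :=
  C ⊆ X ∧ (∀ u ∈ C, ∀ v ∈ C, u ≠ v → ReachIn A X u v) ∧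
    ∀ D, C ⊆ D → D ⊆ X →
      (∀ u ∈ D, ∀ v ∈ D, u ≠ v → ReachIn A X u v) → D = C

lemma reach_arc_aux {V : Type*} {A : V → V → Prop} {S : Set V} (hS : TransOn A Sᶜ)
    {X : Set V} (hX : X ⊆ Sᶜ) {u v : V} (h : ReachIn A X u v) :
    A u v ∧ u ∈ X ∧ v ∈ X := by
  induction h with
  | single h => exact ⟨h.1, h.2.1, h.2.2⟩
  | tail _ h ih =>
    exact ⟨hS _ (hX ih.2.1) _ (hX ih.2.2) _ (hX h.2.2) ih.1 h.1, ih.2.1, h.2.2⟩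

/-- with a transitivity modulator `S`, `G` has a bidirectional
clique of size ≥ k iff some bidirectional clique `S' ⊆ S` can be extended by
an scc of the graph induced on the vertices outside `S` bidirectionally
connected to all of `S'`, reaching total size ≥ k. -/
theorem biClique_iff_modulator_extension {V : Type*} [Fintype V]
    (A : V → V → Prop) (S : Set V) (hS : TransOn A Sᶜ) (k : ℕ) :
    (∃ K : Set V, BiClique A K ∧ k ≤ K.ncard) ↔
      ∃ S' ⊆ S, BiClique A S' ∧
        ∃ C : Set V,
          IsSCCIn A {v | v ∉ S ∧ ∀ s ∈ S', A v s ∧ A s v} C ∧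
          k ≤ (C ∪ S').ncard := by
  constructor
  · rintro ⟨K, hK, hk⟩
    refine ⟨K ∩ S, Set.inter_subset_right, fun u hu v hv huv => hK u hu.1 v hv.1 huv, ?_⟩
    set X : Set V := {v | v ∉ S ∧ ∀ s ∈ K ∩ S, A v s ∧ A s v} with hXdef
    have hKX : K \ S ⊆ X := fun v hv =>
      ⟨hv.2, fun s hs => hK v hv.1 s hs.1 (fun h => hv.2 (h ▸ hs.2))⟩
    set P : Set V → Prop := fun D => K \ S ⊆ D ∧ D ⊆ X ∧
      ∀ u ∈ D, ∀ v ∈ D, u ≠ v → ReachIn A X u v with hPdef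
    have hPK : P (K \ S) := ⟨subset_rfl, hKX, fun u hu v hv huv =>
      Relation.TransGen.single ⟨(hK u hu.1 v hv.1 huv).1, hKX hu, hKX hv⟩⟩
    obtain ⟨M, hM, hmax⟩ :=
      Set.Finite.exists_maximalFor id {D | P D} (Set.toFinite _) ⟨_, hPK⟩
    refine ⟨M, ⟨hM.2.1, hM.2.2, fun D hMD hDX hDp =>
      Set.Subset.antisymm (hmax (j := D) ⟨hM.1.trans hMD, hDX, hDp⟩ hMD) hMD⟩, ?_⟩
    calc k ≤ K.ncard := hk
      _ ≤ (M ∪ K ∩ S).ncard := Set.ncard_le_ncard (fun v hv => by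
            by_cases h : v ∈ S
            · exact Or.inr ⟨hv, h⟩
            · exact Or.inl (hM.1 ⟨hv, h⟩)) (Set.toFinite _)
  · rintro ⟨S', hS'S, hS', C, ⟨hCX, hCreach, _⟩, hk⟩
    have hXc : {v | v ∉ S ∧ ∀ s ∈ S', A v s ∧ A s v} ⊆ Sᶜ := fun v hv => hv.1
    refine ⟨C ∪ S', ?_, hk⟩
    intro u hu v hv huv
    rcases hu with hu | hu <;> rcases hv with hv | hv
    · exact ⟨(reach_arc_aux hS hXc (hCreach u hu v hv huv)).1,
        (reach_arc_aux hS hXc (hCreach v hv u hu huv.symm)).1⟩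
    · exact ⟨((hCX hu).2 v hv).1, ((hCX hu).2 v hv).2⟩
    · exact ⟨((hCX hv).2 u hu).2, ((hCX hv).2 u hu).1⟩
    · exact hS' u hu v hv huv
end

section
/- Let G = (V, A) be a directed graph with an inherent transitivity modulator B (there exists M ⊆ B × B such that (V, A Δ M) is transitive). Let W = V \ B. If two vertices u, v ∈ W are joined by arcs in both directions in G, then they are real twins in the associated symmetric graph Ĝ, i.e., N_Ĝ[u] = N_Ĝ[v], where Ĝ is the undirected graph with edge {x,y} iff both (x,y) and (y,x) are arcs of G. -/
/-- Adjacency in the undirected graph `Ĝ` associated with the digraph `A`: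
an edge `{x, y}` whenever both arcs are present. -/
def HatAdj {V : Type*} (A : V → V → Prop) (x y : V) : Prop :=
  x ≠ y ∧ A x y ∧ A y x

/-- with an inherent transitivity modulator `B` (witnessed by
`M ⊆ B × B` with `A Δ M` transitive), two white vertices joined by arcs in
both directions are real twins in `Ĝ`. -/
theorem white_bidirectional_real_twins {V : Type*} (A : V → V → Prop)
    (B : Set V) (M : Set (V × V)) (hM : M ⊆ B ×ˢ B)
    (hT : Transitive (XorRel A M)) (u v : V) (hu : u ∉ B) (hv : v ∉ B)
    (huv : A u v ∧ A v u) :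
    {w : V | w = u ∨ HatAdj A u w} = {w : V | w = v ∨ HatAdj A v w} := by
  by_cases hne : u = v
  · subst hne; rfl
  have key1 : ∀ x y : V, x ∉ B → (XorRel A M x y ↔ A x y) := by
    intro x y hx
    have h : (x, y) ∉ M := fun h => hx (hM h).1
    simp [XorRel, Xor', xor_def, h]
  have key2 : ∀ x y : V, y ∉ B → (XorRel A M x y ↔ A x y) := by
    intro x y hy
    have h : (x, y) ∉ M := fun h => hy (hM h).2
    simp [XorRel, Xor', xor_def, h]
  have main : ∀ a b : V, a ∉ B → b ∉ B → A a b → A b a →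
      ∀ w, HatAdj A a w → w = b ∨ HatAdj A b w := by
    rintro a b ha hb hAab hAba w ⟨hwne, haw, hwa⟩
    by_cases hwb : w = b
    · exact Or.inl hwb
    refine Or.inr ⟨fun h => hwb h.symm, ?_, ?_⟩
    · exact (key1 b w hb).mp (hT ((key1 b a hb).mpr hAba) ((key1 a w ha).mpr haw))
    · exact (key2 w b hb).mp (hT ((key2 w a ha).mpr hwa) ((key1 a b ha).mpr hAab))
  ext w
  simp only [Set.mem_setOf_eq]
  constructor
  · rintro (rfl | hadj)
    · exact Or.inr ⟨fun h => hne h.symm, huv.2, huv.1⟩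
    · exact main u v hu hv huv.1 huv.2 w hadj
  · rintro (rfl | hadj)
    · exact Or.inr ⟨hne, huv.1, huv.2⟩
    · exact main v u hv hu huv.2 huv.1 w hadj
end

section
/- Let G = (V, A) be a directed graph with inherent transitivity modulator B and W = V \ B, and let Ĝ be the undirected graph with edge {u,v} iff both arcs (u,v),(v,u) exist in G. Then no vertex of B is adjacent in Ĝ to white vertices of two distinct connected components of Ĝ[W]. -/
/-- with an inherent transitivity modulator `B`, no blue vertex
is adjacent in `Ĝ` to white vertices of two distinct connected components of
`Ĝ[W]` (i.e. its white neighbours are all connected within `Ĝ[W]`). -/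
theorem blue_neighbors_in_one_white_cluster {V : Type*} (A : V → V → Prop)
    (B : Set V) (M : Set (V × V)) (hM : M ⊆ B ×ˢ B)
    (hT : Transitive (XorRel A M)) (b : V) (hb : b ∈ B) (u v : V)
    (hu : u ∉ B) (hv : v ∉ B) (hbu : HatAdj A b u) (hbv : HatAdj A b v) :
    Relation.ReflTransGen (fun a c => a ∉ B ∧ c ∉ B ∧ HatAdj A a c) u v := by
  by_cases huv : u = v
  · subst huv; exact .refl
  have h1 : XorRel A M u b := Or.inl ⟨hbu.2.2, fun h => hu (hM h).1⟩
  have h2 : XorRel A M b v := Or.inl ⟨hbv.2.1, fun h => hv (hM h).2⟩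
  have hAuv : A u v := by
    rcases hT h1 h2 with ⟨h, -⟩ | ⟨h, -⟩
    · exact h
    · exact absurd (hM h).1 hu
  have h4 : XorRel A M v b := Or.inl ⟨hbv.2.2, fun h => hv (hM h).1⟩
  have h5 : XorRel A M b u := Or.inl ⟨hbu.2.1, fun h => hu (hM h).2⟩
  have hAvu : A v u := by
    rcases hT h4 h5 with ⟨h, -⟩ | ⟨h, -⟩
    · exact h
    · exact absurd (hM h).1 hv
  exact .single ⟨hu, hv, huv, hAuv, hAvu⟩
end

section
/- Let G = (V, A) be a directed graph such that adding a set M of arcs (with M ∩ A = ∅ and all endpoints of M in B ⊆ V) makes (V, A ∪ M) transitive, and let Ĝ be the undirected graph with edge {u,v} iff both (u,v),(v,u) ∈ A. Then every white vertex u ∈ V \ B is adjacent in Ĝ to every other vertex of its connected component in Ĝ. -/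
/-- if adding a set `M ⊆ B × B` of missing arcs makes
`(V, A ∪ M)` transitive, then every white vertex `u ∉ B` is adjacent in `Ĝ`
to every other vertex of its connected component in `Ĝ`. -/
theorem white_adjacent_to_component {V : Type*} (A : V → V → Prop)
    (B : Set V) (M : Set (V × V)) (hMB : M ⊆ B ×ˢ B)
    (hMA : ∀ p ∈ M, ¬ A p.1 p.2)
    (hT : Transitive (fun x y : V => A x y ∨ (x, y) ∈ M))
    (u v : V) (hu : u ∉ B) (huv : u ≠ v)
    (hconn : Relation.ReflTransGen (HatAdj A) u v) :
    A u v ∧ A v u := by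
  have key : ∀ w, Relation.ReflTransGen (HatAdj A) u w →
      u = w ∨ ((A u w ∨ (u, w) ∈ M) ∧ (A w u ∨ (w, u) ∈ M)) := by
    intro w hw
    induction hw with
    | refl => exact Or.inl rfl
    | @tail b c hb hbc ih =>
      right
      rcases ih with rfl | ih
      · exact ⟨Or.inl hbc.2.1, Or.inl hbc.2.2⟩
      · exact ⟨hT ih.1 (Or.inl hbc.2.1), hT (Or.inl hbc.2.2) ih.2⟩
  rcases key v hconn with rfl | ⟨h1, h2⟩
  · exact absurd rfl huv
  constructor
  · rcases h1 with h | h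
    · exact h
    · exact absurd (hMB h).1 hu
  · rcases h2 with h | h
    · exact h
    · exact absurd (hMB h).2 hu
end

section
/- Let G be an undirected graph whose vertex set is partitioned into blue vertices B and white vertices W, such that every two adjacent white vertices are real twins, no two white vertices in different components of G[W] are adjacent in G, and each component of G[W] is a clique (white cluster). If k > |B| + 1, then G has a clique of size k if and only if the graph G' obtained by deleting one arbitrary vertex from each white cluster has a clique of size k − 1. -/
/-- Connectivity within the white vertices (vertices outside `B`) of the
graph `G`: a walk staying among white vertices. -/
def WhiteConn {V : Type*} (G : SimpleGraph V) (B : Finset V) : V → V → Prop :=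
  Relation.ReflTransGen (fun a b => a ∉ B ∧ b ∉ B ∧ G.Adj a b)

/-- with blue vertices `B` and white vertices `V \ B`, where
adjacent white vertices are real twins, white vertices of distinct white
clusters are non-adjacent, and each white cluster is a clique, if
`k > |B| + 1` then `G` has a clique of size `k` iff, after deleting one
vertex from each white cluster (a set `D` hitting each cluster exactly once),
there is a clique of size `k - 1` avoiding `D`. -/
theorem rr3_safe {V : Type*} [Fintype V] [DecidableEq V]
    (G : SimpleGraph V) (B : Finset V) (k : ℕ)
    (htwin : ∀ u v : V, u ∉ B → v ∉ B → G.Adj u v →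
      ∀ x : V, (x = u ∨ G.Adj u x) ↔ (x = v ∨ G.Adj v x))
    (hcluster : ∀ u v : V, u ∉ B → v ∉ B → u ≠ v →
      WhiteConn G B u v → G.Adj u v)
    (hnonadj : ∀ u v : V, u ∉ B → v ∉ B → ¬ WhiteConn G B u v → ¬ G.Adj u v)
    (D : Finset V) (hDW : ∀ d ∈ D, d ∉ B)
    (hD : ∀ w : V, w ∉ B → ∃! d : V, d ∈ D ∧ WhiteConn G B w d)
    (hk : B.card + 1 < k) :
    (∃ s : Finset V, G.IsNClique k s) ↔
      ∃ s : Finset V, G.IsNClique (k - 1) s ∧ Disjoint s D := by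
  constructor
  · rintro ⟨s, hs⟩
    have huniq : ∀ d ∈ s, d ∈ D → ∀ d' ∈ s, d' ∈ D → d = d' := by
      intro d hd hdD d' hd' hd'D
      by_cases hdd : d = d'
      · exact hdd
      · have hadj : G.Adj d d' := hs.1 hd hd' hdd
        have hwc : WhiteConn G B d d' :=
          Relation.ReflTransGen.single ⟨hDW d hdD, hDW d' hd'D, hadj⟩
        obtain ⟨e, _, he⟩ := hD d (hDW d hdD)
        exact (he d ⟨hdD, Relation.ReflTransGen.refl⟩).trans
          (he d' ⟨hd'D, hwc⟩).symm
    have hsne : s.Nonempty := by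
      rw [← Finset.card_pos, hs.2]; omega
    by_cases hsd : ∃ d ∈ s, d ∈ D
    · obtain ⟨d, hds, hdD⟩ := hsd
      refine ⟨s.erase d, ⟨hs.1.subset (by simp [Finset.erase_subset]), ?_⟩, ?_⟩
      · rw [Finset.card_erase_of_mem hds, hs.2]
      · rw [Finset.disjoint_left]
        intro a ha haD
        exact (Finset.mem_erase.mp ha).1
          (huniq a (Finset.mem_of_mem_erase ha) haD d hds hdD)
    · push_neg at hsd
      obtain ⟨x, hx⟩ := hsne
      refine ⟨s.erase x, ⟨hs.1.subset (by simp [Finset.erase_subset]), ?_⟩, ?_⟩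
      · rw [Finset.card_erase_of_mem hx, hs.2]
      · rw [Finset.disjoint_left]
        intro a ha haD
        exact hsd a (Finset.mem_of_mem_erase ha) haD
  · rintro ⟨s, hs, hsD⟩
    have hw : ∃ w ∈ s, w ∉ B := by
      by_contra h
      push_neg at h
      have hsub : s ⊆ B := fun x hx => h x hx
      have := Finset.card_le_card hsub
      rw [hs.2] at this; omega
    obtain ⟨w, hws, hwB⟩ := hw
    obtain ⟨d, ⟨hdD, hwd⟩, _⟩ := hD w hwB
    have hdB := hDW d hdD
    have hds : d ∉ s := fun h => Finset.disjoint_left.mp hsD h hdD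
    have hwne : w ≠ d := fun h => hds (h ▸ hws)
    have hadj : G.Adj w d := hcluster w d hwB hdB hwne hwd
    refine ⟨insert d s, ?_, ?_⟩
    · rw [Finset.coe_insert]
      refine hs.1.insert ?_
      intro b hbs hbd
      have hleft : b = w ∨ G.Adj w b := by
        by_cases hbw : b = w
        · exact Or.inl hbw
        · exact Or.inr (hs.1 hws hbs fun h => hbw h.symm)
      rcases (htwin w d hwB hdB hadj b).mp hleft with h | h
      · exact absurd h.symm hbd
      · exact h
    · rw [Finset.card_insert_of_notMem hds, hs.2]; omega
end
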